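/- Let m ≥ 1 and let q be an integer with q² ≡ 1 (mod m). Then gcd(m, q−1) · gcd(m, q+1) equals either m or 2m. -/

import Mathlib

theorem stmt9 (m : ℕ) (hm : 1 ≤ m) (q : ℤ) (h : (m : ℤ) ∣ q ^ 2 - 1) :
    Int.gcd (m : ℤ) (q - 1) * Int.gcd (m : ℤ) (q + 1) = m ∨
    Int.gcd (m : ℤ) (q - 1) * Int.gcd (m : ℤ) (q + 1) = 2 * m := by
  set d1 := Int.gcd (m : ℤ) (q - 1) with hd1
  set d2 := Int.gcd (m : ℤ) (q + 1) with hd2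
  -- m divides d1 * d2
  have hprod : (m : ℤ) ∣ (q - 1) * (q + 1) := by
    have : (q - 1) * (q + 1) = q ^ 2 - 1 := by ring
    rwa [this]
  have hgcdfull : Int.gcd (m : ℤ) ((q - 1) * (q + 1)) = m := by
    rw [Int.gcd_eq_natAbs_left hprod]
    simp
  have hmP : m ∣ d1 * d2 := by
    have hkey : Int.gcd (m : ℤ) ((q - 1) * (q + 1)) ∣ d1 * d2 := by
      have : Nat.gcd (m : ℤ).natAbs ((q - 1).natAbs * (q + 1).natAbs) ∣ Nat.gcd (m : ℤ).natAbs (q - 1).natAbs * Nat.gcd (m : ℤ).natAbs (q + 1).natAbs := gcd_mul_dvd_mul_gcd (m : ℤ).natAbs (q - 1).natAbs (q + 1).natAbs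
      simpa [hd1, hd2, Int.gcd_eq_natAbs_gcd_natAbs, Int.natAbs_mul] using this
    rwa [hgcdfull] at hkey
  -- d1 * d2 divides 2 * m
  have hg2 : Nat.gcd d1 d2 ∣ 2 := by
    have h1 : (Nat.gcd d1 d2 : ℤ) ∣ q - 1 :=
      dvd_trans (Int.natCast_dvd_natCast.mpr (Nat.gcd_dvd_left d1 d2)) (Int.gcd_dvd_right _ _)
    have h2 : (Nat.gcd d1 d2 : ℤ) ∣ q + 1 :=
      dvd_trans (Int.natCast_dvd_natCast.mpr (Nat.gcd_dvd_right d1 d2)) (Int.gcd_dvd_right _ _)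
    have : (Nat.gcd d1 d2 : ℤ) ∣ 2 := by
      have := dvd_sub h2 h1
      simpa using this
    exact_mod_cast this
  have hl : Nat.lcm d1 d2 ∣ m := by
    apply Nat.lcm_dvd
    · have := Int.gcd_dvd_left (a := (m : ℤ)) (b := q - 1)
      exact Int.ofNat_dvd.mp (by simpa using this)
    · have := Int.gcd_dvd_left (a := (m : ℤ)) (b := q + 1)
      exact Int.ofNat_dvd.mp (by simpa using this)
  have hP2m : d1 * d2 ∣ 2 * m := by
    have := mul_dvd_mul hg2 hl
    rwa [Nat.gcd_mul_lcm] at this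
  obtain ⟨k, hk⟩ := hmP
  have hk2 : k ∣ 2 := by
    have : m * k ∣ m * 2 := by rw [← hk, Nat.mul_comm m 2]; exact hP2m
    exact (Nat.mul_dvd_mul_iff_left (by omega : 0 < m)).mp this
  rcases (Nat.dvd_prime Nat.prime_two).mp hk2 with h1 | h1
  · left; rw [hk, h1, mul_one]
  · right; rw [hk, h1, mul_comm]
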